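/- Let R be a commutative ring and let q, t ∈ R be invertible. Let m ∈ ℤ, n ≥ 1 with gcd(m,n) = 1, k ≥ 1 and 2 ≤ l ≤ nk be integers. Then, with all powers of q and t interpreted as integer powers of units of R, the following identity holds: t^{(l−1)·⌊m(1−l)/n⌋} · q^{(nk−l+1)·⌊m(nk−l+1)/n⌋} · (1 − t·q^{−1}) · Σ_{i=0}^{n−1} q^{Σ_{j=1}^{nk−l+1} ⌊(−mj+i)/n⌋} · t^{Σ_{j=1}^{l−2} ⌊(mj+i)/n⌋} + t^{⌊m(1−l)/n⌋+1} · q^{−⌊m(nk−l+1)/n⌋−1} · (1 − t^{1−l}·q^{−nk+l−1}) · Σ_{i=0}^{n−1} q^{Σ_{j=1}^{nk−l+1} ⌊(mj+i)/n⌋} · t^{Σ_{j=1}^{l−2} ⌊(−mj+i)/n⌋} = (1 − t^{2−l}·q^{−nk+l−2}) · Σ_{i=0}^{n−1} q^{Σ_{j=1}^{nk−l} ⌊(mj+i)/n⌋} · t^{Σ_{j=1}^{l−1} ⌊(−mj+i)/n⌋}. -/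

import Mathlib

namespace HookAux

lemma ediv_helper {n : ℤ} (x c s : ℤ) (h : x = n * c + s) (h0 : 0 ≤ s) (h1 : s < n) :
    x / n = c := by
  subst h
  rw [add_comm, Int.add_mul_ediv_left _ _ (by omega : n ≠ 0),
    Int.ediv_eq_zero_of_lt h0 h1, zero_add]

lemma refl_div {n : ℤ} {i : ℤ} (h0 : 0 ≤ i) (h1 : i < n) (z : ℤ) :
    (z + (n - 1 - i)) / n = -((-z + i) / n) := by
  have hn : 0 < n := lt_of_le_of_lt h0 h1
  have hd := Int.mul_ediv_add_emod (i - z) n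
  have he1 := Int.emod_nonneg (i - z) (by omega : n ≠ 0)
  have he2 := Int.emod_lt_of_pos (i - z) hn
  have key : (z + (n - 1 - i)) / n = -((i - z) / n) := by
    apply ediv_helper _ _ (n - 1 - (i - z) % n)
    · rw [mul_neg]; linarith
    · linarith
    · linarith
  rw [key, show -z + i = i - z by ring]

noncomputable def SA (m : ℤ) (n : ℕ) (M i : ℤ) : ℤ := ∑ j ∈ Finset.Icc (1:ℤ) M, ((-m * j + i) / (n:ℤ))
noncomputable def SB (m : ℤ) (n : ℕ) (M i : ℤ) : ℤ := ∑ j ∈ Finset.Icc (1:ℤ) M, ((m * j + i) / (n:ℤ))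

lemma SB_eq (m : ℤ) (n : ℕ) (M i : ℤ) : SB m n M i = SA (-m) n M i := by
  simp [SA, SB]

lemma SA_reflect {n : ℕ} {i : ℤ} (h0 : 0 ≤ i) (h1 : i < (n:ℤ)) (m M : ℤ) :
    SA m n M ((n:ℤ) - 1 - i) = -(SB m n M i) := by
  unfold SA SB
  rw [← Finset.sum_neg_distrib]
  apply Finset.sum_congr rfl
  intro j _
  have := refl_div h0 h1 (-m * j)
  rw [this]; congr 2; ring

lemma SB_reflect {n : ℕ} {i : ℤ} (h0 : 0 ≤ i) (h1 : i < (n:ℤ)) (m M : ℤ) :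
    SB m n M ((n:ℤ) - 1 - i) = -(SA m n M i) := by
  rw [SB_eq, SA_reflect h0 h1, SB_eq, neg_neg]

lemma icc_sum {β : Type*} [AddCommMonoid β] (M : ℤ) (f : ℤ → β) :
    ∑ j ∈ Finset.Icc (1:ℤ) M, f j = ∑ j ∈ Finset.range M.toNat, f ((j:ℤ) + 1) := by
  refine Finset.sum_nbij' (fun j => (j - 1).toNat) (fun j => (j:ℤ) + 1) ?_ ?_ ?_ ?_ ?_
  · intro a ha; simp only [Finset.mem_Icc] at ha; simp only [Finset.mem_range]; omega
  · intro a ha; simp only [Finset.mem_range] at ha; simp only [Finset.mem_Icc]; omega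
  · intro a ha; simp only [Finset.mem_Icc] at ha; omega
  · intro a ha; simp only [Finset.mem_range] at ha; omega
  · intro a ha; simp only [Finset.mem_Icc] at ha; congr 1; omega

lemma E3 {n : ℕ} (hn : 0 < n) (m L i σ E : ℤ) (hL : 0 ≤ L)
    (hrel : i + m * (L + 1) = σ + (n:ℤ) * E) :
    SB m n L i = SA m n L σ + L * E := by
  have hLt : ((L.toNat : ℤ)) = L := Int.toNat_of_nonneg hL
  unfold SA SB
  rw [icc_sum L (fun j => (m * j + i) / (n:ℤ)), icc_sum L (fun j => (-m * j + σ) / (n:ℤ))]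
  rw [← Finset.sum_range_reflect]
  have : ∀ j ∈ Finset.range L.toNat,
      (m * ((((L.toNat - 1 - j : ℕ)):ℤ) + 1) + i) / (n:ℤ)
        = (-m * ((j:ℤ) + 1) + σ) / (n:ℤ) + E := by
    intro j hj
    simp only [Finset.mem_range] at hj
    have hc : (((L.toNat - 1 - j : ℕ)):ℤ) = L - 1 - j := by omega
    rw [hc]
    have : m * (L - 1 - (j:ℤ) + 1) + i = (-m * ((j:ℤ) + 1) + σ) + (n:ℤ) * E := by linarith
    rw [this, Int.add_mul_ediv_left _ _ (by exact_mod_cast hn.ne' : (n:ℤ) ≠ 0)]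
  rw [Finset.sum_congr rfl this, Finset.sum_add_distrib, Finset.sum_const, Finset.card_range,
    nsmul_eq_mul, hLt]

lemma E2 {n : ℕ} (hn : 0 < n) (m N i σ F : ℤ) (hN : 1 ≤ N)
    (hrel : i - m * N = σ + (n:ℤ) * F) :
    SB m n N σ = SA m n N i - N * F + (m * N + σ) / (n:ℤ) - σ / (n:ℤ) := by
  have hNt : ((N.toNat : ℤ)) = N := Int.toNat_of_nonneg (by omega)
  have hn' : ((n:ℤ)) ≠ 0 := by exact_mod_cast hn.ne'
  have hA : SA m n N i = (∑ j ∈ Finset.range N.toNat, (m * (j:ℤ) + σ) / (n:ℤ)) + N * F := by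
    unfold SA
    rw [icc_sum N (fun j => (-m * j + i) / (n:ℤ)), ← Finset.sum_range_reflect]
    have : ∀ j ∈ Finset.range N.toNat,
        (-m * ((((N.toNat - 1 - j : ℕ)):ℤ) + 1) + i) / (n:ℤ)
          = (m * (j:ℤ) + σ) / (n:ℤ) + F := by
      intro j hj
      simp only [Finset.mem_range] at hj
      have hc : (((N.toNat - 1 - j : ℕ)):ℤ) = N - 1 - j := by omega
      rw [hc]
      have : -m * (N - 1 - (j:ℤ) + 1) + i = (m * (j:ℤ) + σ) + (n:ℤ) * F := by linarith
      rw [this, Int.add_mul_ediv_left _ _ hn']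
    rw [Finset.sum_congr rfl this, Finset.sum_add_distrib, Finset.sum_const, Finset.card_range,
      nsmul_eq_mul, hNt]
  have hB : SB m n N σ = (∑ j ∈ Finset.range N.toNat, (m * (j:ℤ) + σ) / (n:ℤ))
      + (m * N + σ) / (n:ℤ) - σ / (n:ℤ) := by
    unfold SB
    rw [icc_sum N (fun j => (m * j + σ) / (n:ℤ))]
    have h1 := Finset.sum_range_succ' (fun j : ℕ => (m * (j:ℤ) + σ) / (n:ℤ)) N.toNat
    have h2 := Finset.sum_range_succ (fun j : ℕ => (m * (j:ℤ) + σ) / (n:ℤ)) N.toNat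
    simp only [Nat.cast_add, Nat.cast_one, Nat.cast_zero, mul_zero, zero_add] at h1 h2
    rw [hNt] at h2
    have : (∑ j ∈ Finset.range N.toNat, (m * ((j:ℤ) + 1) + σ) / (n:ℤ))
        = (∑ j ∈ Finset.range N.toNat, (m * (j:ℤ) + σ) / (n:ℤ))
          + (m * N + σ) / (n:ℤ) - σ / (n:ℤ) := by
      rw [← h2]; omega
    simpa using this
  omega

lemma SA_peel (m : ℤ) (n : ℕ) {N : ℤ} (hN : 1 ≤ N) (x : ℤ) :
    SA m n N x = SA m n (N - 1) x + (-m * N + x) / (n:ℤ) := by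
  unfold SA
  rw [show Finset.Icc (1:ℤ) N = insert N (Finset.Icc 1 (N - 1)) by
        ext y; simp only [Finset.mem_Icc, Finset.mem_insert]; omega,
    Finset.sum_insert (by simp only [Finset.mem_Icc]; omega)]
  ring

lemma SB_peel (m : ℤ) (n : ℕ) {N : ℤ} (hN : 1 ≤ N) (x : ℤ) :
    SB m n N x = SB m n (N - 1) x + (m * N + x) / (n:ℤ) := by
  unfold SB
  rw [show Finset.Icc (1:ℤ) N = insert N (Finset.Icc 1 (N - 1)) by
        ext y; simp only [Finset.mem_Icc, Finset.mem_insert]; omega,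
    Finset.sum_insert (by simp only [Finset.mem_Icc]; omega)]
  ring

lemma perm_sum {β : Type*} [AddCommMonoid β] (n : ℕ) (hn : 0 < n) (r' : ℕ) (hr' : r' ≤ n)
    (f : ℕ → β) :
    ∑ i ∈ Finset.range n, f i = ∑ i ∈ Finset.range n, f ((i + (n - r')) % n) := by
  refine Finset.sum_nbij' (fun i => (i + r') % n) (fun i => (i + (n - r')) % n) ?_ ?_ ?_ ?_ ?_
  · intro a _; simp only [Finset.mem_range]; exact Nat.mod_lt _ hn
  · intro a _; simp only [Finset.mem_range]; exact Nat.mod_lt _ hn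
  · intro a ha; simp only [Finset.mem_range] at ha
    rw [Nat.mod_add_mod, show a + r' + (n - r') = a + n by omega, Nat.add_mod_right,
      Nat.mod_eq_of_lt ha]
  · intro a ha; simp only [Finset.mem_range] at ha
    rw [Nat.mod_add_mod, show a + (n - r') + r' = a + n by omega, Nat.add_mod_right,
      Nat.mod_eq_of_lt ha]
  · intro a ha; simp only [Finset.mem_range] at ha
    congr 1
    rw [Nat.mod_add_mod, show a + r' + (n - r') = a + n by omega, Nat.add_mod_right,
      Nat.mod_eq_of_lt ha]

lemma sigma_int (n : ℕ) (i : ℕ) (hi : i < n) (r' : ℕ) (hr1 : r' ≤ n) :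
    (((i + (n - r')) % n : ℕ) : ℤ)
      = (i:ℤ) - r' + (n:ℤ) * (if (i:ℤ) < (r':ℤ) then 1 else 0) := by
  rcases lt_or_ge i r' with h | h
  · rw [Nat.mod_eq_of_lt (by omega), if_pos (by exact_mod_cast h)]
    push_cast [Nat.cast_sub hr1]; ring
  · rw [show i + (n - r') = (i - r') + n by omega, Nat.add_mod_right,
      Nat.mod_eq_of_lt (by omega), if_neg (by exact_mod_cast not_lt.mpr h)]
    push_cast [Nat.cast_sub h]; ring

variable {R : Type*} [CommRing R]

def W (q t : Rˣ) (e f : ℤ) : R := ((q ^ e * t ^ f : Rˣ) : R)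

lemma W_mul (q t : Rˣ) (e f e' f' : ℤ) :
    (W q t e f : R) * W q t e' f' = W q t (e + e') (f + f') := by
  unfold W
  rw [← Units.val_mul]
  congr 1
  rw [zpow_add, zpow_add]
  exact (mul_mul_mul_comm _ _ _ _)

lemma q_eq_W (q t : Rˣ) (e : ℤ) : ((q ^ e : Rˣ) : R) = W q t e 0 := by simp [W]
lemma t_eq_W (q t : Rˣ) (f : ℤ) : ((t ^ f : Rˣ) : R) = W q t 0 f := by simp [W]
lemma tval_eq_W (q t : Rˣ) : ((t : Rˣ) : R) = W q t 0 1 := by simp [W]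
lemma qinv_eq_W (q t : Rˣ) : ((q⁻¹ : Rˣ) : R) = W q t (-1) 0 := by simp [W]

lemma mono_eq (q t : Rˣ) {e e' f f' : ℤ} (he : e = e') (hf : f = f') :
    ((q ^ e : Rˣ) : R) * ((t ^ f : Rˣ) : R) = ((q ^ e' : Rˣ) : R) * ((t ^ f' : Rˣ) : R) := by
  rw [he, hf]

lemma master (q t : Rˣ) (n : ℕ) (a b χ : ℕ → ℤ) (hχ : ∀ i, χ i = 0 ∨ χ i = 1)
    (B K N L : ℤ) {S1 S2 S3 : R}
    (h1 : S1 = ∑ i ∈ Finset.range n,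
        ((q ^ (-(N+1) * (B + χ i) - a i) : Rˣ):R) * ((t ^ (L * (K - B - χ i) - b i) : Rˣ):R))
    (h2 : S2 = ∑ i ∈ Finset.range n,
        ((q ^ (-(a i)) : Rˣ):R) * ((t ^ (-(b i)) : Rˣ):R))
    (h3 : S3 = ∑ i ∈ Finset.range n,
        ((q ^ (-(a i) - B - χ i) : Rˣ):R) * ((t ^ (B - K + χ i - b i) : Rˣ):R)) :
    ((t ^ ((L+1) * (B - K)) : Rˣ) : R) * ((q ^ (N * B) : Rˣ) : R)
        * (1 - (t:R) * ((q⁻¹:Rˣ):R)) * S1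
      + ((t ^ (B - K + 1) : Rˣ):R) * ((q ^ (-B - 1) : Rˣ):R)
        * (1 - ((t ^ (-(L+1)) : Rˣ):R) * ((q ^ (-N) : Rˣ):R)) * S2
      = (1 - ((t ^ (-L) : Rˣ):R) * ((q ^ (-N - 1) : Rˣ):R)) * S3 := by
  rw [h1, h2, h3, Finset.mul_sum, Finset.mul_sum, Finset.mul_sum, ← Finset.sum_add_distrib]
  apply Finset.sum_congr rfl
  intro i _
  rcases hχ i with h | h <;> rw [h] <;>
  · simp only [q_eq_W q t, t_eq_W q t, tval_eq_W q t, qinv_eq_W q t]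
    simp only [mul_sub, sub_mul, mul_one, one_mul, W_mul]
    ring_nf

end HookAux

open HookAux

/-- the key identity `eqn:desire`: let `R` be a commutative ring and
`q, t` invertible elements of `R` (given as units), `m ∈ ℤ`, `n ≥ 1` with
`gcd(m,n) = 1`, `k ≥ 1` and `2 ≤ l ≤ nk`.  All powers of `q` and `t` are integer powers
of units, and `⌊·⌋` is floor division of integers (here `/` on `ℤ`, the divisor `n`
being positive).  Then
`t^{(l−1)⌊m(1−l)/n⌋} q^{(nk−l+1)⌊m(nk−l+1)/n⌋} (1−tq⁻¹) Σᵢ q^{Σⱼ⌊(−mj+i)/n⌋} t^{Σⱼ⌊(mj+i)/n⌋}`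
`+ t^{⌊m(1−l)/n⌋+1} q^{−⌊m(nk−l+1)/n⌋−1} (1−t^{1−l}q^{−nk+l−1}) Σᵢ q^{Σⱼ⌊(mj+i)/n⌋} t^{Σⱼ⌊(−mj+i)/n⌋}`
`= (1−t^{2−l}q^{−nk+l−2}) Σᵢ q^{Σⱼ⌊(mj+i)/n⌋} t^{Σⱼ⌊(−mj+i)/n⌋}`
with the ranges of summation as in the paper. -/
theorem hook_evaluation_identity (R : Type*) [CommRing R] (q t : Rˣ)
    (m : ℤ) (n : ℕ) (hn : 1 ≤ n) (hgcd : Int.gcd m n = 1)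
    (k : ℕ) (hk : 1 ≤ k) (l : ℕ) (hl2 : 2 ≤ l) (hlnk : l ≤ n * k) :
    ((t ^ (((l : ℤ) - 1) * (m * (1 - (l : ℤ)) / (n : ℤ))) : Rˣ) : R)
        * ((q ^ ((((n * k : ℕ) : ℤ) - (l : ℤ) + 1)
            * (m * (((n * k : ℕ) : ℤ) - (l : ℤ) + 1) / (n : ℤ))) : Rˣ) : R)
        * (1 - (t : R) * ((q⁻¹ : Rˣ) : R))
        * (∑ i ∈ Finset.range n,
            ((q ^ (∑ j ∈ Finset.Icc (1 : ℤ) (((n * k : ℕ) : ℤ) - (l : ℤ) + 1),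
                ((-m * j + (i : ℤ)) / (n : ℤ))) : Rˣ) : R)
            * ((t ^ (∑ j ∈ Finset.Icc (1 : ℤ) ((l : ℤ) - 2),
                ((m * j + (i : ℤ)) / (n : ℤ))) : Rˣ) : R))
    + ((t ^ (m * (1 - (l : ℤ)) / (n : ℤ) + 1) : Rˣ) : R)
        * ((q ^ (-(m * (((n * k : ℕ) : ℤ) - (l : ℤ) + 1) / (n : ℤ)) - 1) : Rˣ) : R)
        * (1 - ((t ^ (1 - (l : ℤ)) : Rˣ) : R)
            * ((q ^ (-((n * k : ℕ) : ℤ) + (l : ℤ) - 1) : Rˣ) : R))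
        * (∑ i ∈ Finset.range n,
            ((q ^ (∑ j ∈ Finset.Icc (1 : ℤ) (((n * k : ℕ) : ℤ) - (l : ℤ) + 1),
                ((m * j + (i : ℤ)) / (n : ℤ))) : Rˣ) : R)
            * ((t ^ (∑ j ∈ Finset.Icc (1 : ℤ) ((l : ℤ) - 2),
                ((-m * j + (i : ℤ)) / (n : ℤ))) : Rˣ) : R))
    = (1 - ((t ^ (2 - (l : ℤ)) : Rˣ) : R) * ((q ^ (-((n * k : ℕ) : ℤ) + (l : ℤ) - 2) : Rˣ) : R))
        * (∑ i ∈ Finset.range n,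
            ((q ^ (∑ j ∈ Finset.Icc (1 : ℤ) (((n * k : ℕ) : ℤ) - (l : ℤ)),
                ((m * j + (i : ℤ)) / (n : ℤ))) : Rˣ) : R)
            * ((t ^ (∑ j ∈ Finset.Icc (1 : ℤ) ((l : ℤ) - 1),
                ((-m * j + (i : ℤ)) / (n : ℤ))) : Rˣ) : R)) := by
  have hn0 : 0 < n := hn
  have hnpos : (0:ℤ) < (n:ℤ) := by exact_mod_cast hn0
  have hnz : ((n:ℤ)) ≠ 0 := hnpos.ne'
  set N : ℤ := ((n * k : ℕ) : ℤ) - (l : ℤ) + 1 with hNd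
  set L : ℤ := (l : ℤ) - 2 with hLd
  rw [show (1:ℤ) - (l:ℤ) = -(L + 1) by omega]
  rw [show (l:ℤ) - 1 = L + 1 by omega]
  rw [show ((n * k : ℕ) : ℤ) - (l:ℤ) = N - 1 by omega]
  rw [show -((n * k : ℕ) : ℤ) + (l:ℤ) - 1 = -N by omega]
  rw [show (2:ℤ) - (l:ℤ) = -L by omega]
  rw [show -((n * k : ℕ) : ℤ) + (l:ℤ) - 2 = -N - 1 by omega]
  set B : ℤ := m * N / (n:ℤ) with hBd
  obtain ⟨r, hr0, hr1, hBr⟩ : ∃ r : ℤ, 0 ≤ r ∧ r < (n:ℤ) ∧ m * N = (n:ℤ) * B + r :=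
    ⟨m * N % (n:ℤ), Int.emod_nonneg _ hnz, Int.emod_lt_of_pos _ hnpos,
      by rw [hBd]; exact (Int.mul_ediv_add_emod _ _).symm⟩
  have hN1 : 1 ≤ N := by omega
  have hL0 : 0 ≤ L := by omega
  have hnk : m * (L + 1) = (n:ℤ) * (m * (k:ℤ)) - m * N := by
    rw [hNd, hLd]; push_cast; ring
  rw [show m * -(L + 1) / (n:ℤ) = B - m * (k:ℤ) from
    ediv_helper _ _ r (by linear_combination -hnk + hBr) hr0 hr1]
  have hr'c : ((r.toNat : ℕ) : ℤ) = r := Int.toNat_of_nonneg hr0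
  have hr'le : r.toNat ≤ n := by omega
  -- key2 : the second sum
  have key2 : (∑ i ∈ Finset.range n,
        ((q ^ SB m n N (i:ℤ) : Rˣ) : R) * ((t ^ SA m n L (i:ℤ) : Rˣ) : R))
      = ∑ i ∈ Finset.range n,
        ((q ^ (-(SA m n N (i:ℤ))) : Rˣ) : R) * ((t ^ (-(SB m n L (i:ℤ))) : Rˣ) : R) := by
    calc (∑ i ∈ Finset.range n,
          ((q ^ SB m n N (i:ℤ) : Rˣ) : R) * ((t ^ SA m n L (i:ℤ) : Rˣ) : R))
        = ∑ i ∈ Finset.range n,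
          ((q ^ SB m n N ((n - 1 - i : ℕ):ℤ) : Rˣ) : R)
            * ((t ^ SA m n L ((n - 1 - i : ℕ):ℤ) : Rˣ) : R) :=
          (Finset.sum_range_reflect
            (fun i => ((q ^ SB m n N (i:ℤ) : Rˣ) : R) * ((t ^ SA m n L (i:ℤ) : Rˣ) : R)) n).symm
      _ = _ := by
          apply Finset.sum_congr rfl
          intro i hi
          simp only [Finset.mem_range] at hi
          have h0 : (0:ℤ) ≤ (i:ℤ) := Int.natCast_nonneg i
          have h1 : ((i:ℤ)) < (n:ℤ) := by exact_mod_cast hi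
          rw [show ((n - 1 - i : ℕ):ℤ) = (n:ℤ) - 1 - (i:ℤ) by omega,
            SB_reflect h0 h1 m N, SA_reflect h0 h1 m L]
  -- key3 : the RHS sum
  have key3 : (∑ i ∈ Finset.range n,
        ((q ^ SB m n (N - 1) (i:ℤ) : Rˣ) : R) * ((t ^ SA m n (L + 1) (i:ℤ) : Rˣ) : R))
      = ∑ i ∈ Finset.range n,
        ((q ^ (-(SA m n N (i:ℤ)) - B - (if ((i:ℤ)) < r then 1 else 0)) : Rˣ) : R)
          * ((t ^ (B - m * (k:ℤ) + (if ((i:ℤ)) < r then 1 else 0) - SB m n L (i:ℤ)) : Rˣ) : R) := by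
    calc (∑ i ∈ Finset.range n,
          ((q ^ SB m n (N - 1) (i:ℤ) : Rˣ) : R) * ((t ^ SA m n (L + 1) (i:ℤ) : Rˣ) : R))
        = ∑ i ∈ Finset.range n,
          ((q ^ SB m n (N - 1) ((n - 1 - i : ℕ):ℤ) : Rˣ) : R)
            * ((t ^ SA m n (L + 1) ((n - 1 - i : ℕ):ℤ) : Rˣ) : R) :=
          (Finset.sum_range_reflect
            (fun i => ((q ^ SB m n (N - 1) (i:ℤ) : Rˣ) : R)
              * ((t ^ SA m n (L + 1) (i:ℤ) : Rˣ) : R)) n).symm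
      _ = _ := by
          apply Finset.sum_congr rfl
          intro i hi
          simp only [Finset.mem_range] at hi
          have h0 : (0:ℤ) ≤ (i:ℤ) := Int.natCast_nonneg i
          have h1 : ((i:ℤ)) < (n:ℤ) := by exact_mod_cast hi
          rw [show ((n - 1 - i : ℕ):ℤ) = (n:ℤ) - 1 - (i:ℤ) by omega,
            SB_reflect h0 h1 m (N - 1), SA_reflect h0 h1 m (L + 1)]
          have hbound : 0 ≤ (i:ℤ) - r + (n:ℤ) * (if ((i:ℤ)) < r then 1 else 0) ∧
              (i:ℤ) - r + (n:ℤ) * (if ((i:ℤ)) < r then 1 else 0) < (n:ℤ) := by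
            by_cases h : ((i:ℤ)) < r
            · simp only [if_pos h, mul_one]; omega
            · simp only [if_neg h, mul_zero]; omega
          have hdiv1 : (-m * N + (i:ℤ)) / (n:ℤ) = -B - (if ((i:ℤ)) < r then 1 else 0) :=
            ediv_helper _ _ ((i:ℤ) - r + (n:ℤ) * (if ((i:ℤ)) < r then 1 else 0))
              (by linear_combination -hBr) hbound.1 hbound.2
          have hdiv2 : (m * (L + 1) + (i:ℤ)) / (n:ℤ)
              = m * (k:ℤ) - B - (if ((i:ℤ)) < r then 1 else 0) :=
            ediv_helper _ _ ((i:ℤ) - r + (n:ℤ) * (if ((i:ℤ)) < r then 1 else 0))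
              (by linear_combination hnk - hBr) hbound.1 hbound.2
          have hpA := SA_peel m n hN1 (i:ℤ)
          have hpB := SB_peel m n (show (1:ℤ) ≤ L + 1 by omega) (i:ℤ)
          rw [show L + 1 - 1 = L by ring] at hpB
          exact mono_eq q t (by omega) (by omega)
  -- key1 : the first sum
  have key1 : (∑ i ∈ Finset.range n,
        ((q ^ SA m n N (i:ℤ) : Rˣ) : R) * ((t ^ SB m n L (i:ℤ) : Rˣ) : R))
      = ∑ i ∈ Finset.range n,
        ((q ^ (-(N+1) * (B + (if ((i:ℤ)) < r then 1 else 0)) - SA m n N (i:ℤ)) : Rˣ) : R)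
          * ((t ^ (L * (m * (k:ℤ) - B - (if ((i:ℤ)) < r then 1 else 0)) - SB m n L (i:ℤ)) : Rˣ) : R) := by
    calc (∑ i ∈ Finset.range n,
          ((q ^ SA m n N (i:ℤ) : Rˣ) : R) * ((t ^ SB m n L (i:ℤ) : Rˣ) : R))
        = ∑ i ∈ Finset.range n,
          ((q ^ SA m n N ((n - 1 - i : ℕ):ℤ) : Rˣ) : R)
            * ((t ^ SB m n L ((n - 1 - i : ℕ):ℤ) : Rˣ) : R) :=
          (Finset.sum_range_reflect
            (fun i => ((q ^ SA m n N (i:ℤ) : Rˣ) : R) * ((t ^ SB m n L (i:ℤ) : Rˣ) : R)) n).symm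
      _ = ∑ i ∈ Finset.range n,
          ((q ^ SA m n N ((n - 1 - ((i + (n - r.toNat)) % n) : ℕ):ℤ) : Rˣ) : R)
            * ((t ^ SB m n L ((n - 1 - ((i + (n - r.toNat)) % n) : ℕ):ℤ) : Rˣ) : R) :=
          perm_sum n hn0 r.toNat hr'le
            (fun i => ((q ^ SA m n N ((n - 1 - i : ℕ):ℤ) : Rˣ) : R)
              * ((t ^ SB m n L ((n - 1 - i : ℕ):ℤ) : Rˣ) : R))
      _ = _ := by
          apply Finset.sum_congr rfl
          intro i hi
          simp only [Finset.mem_range] at hi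
          have hslt : (i + (n - r.toNat)) % n < n := Nat.mod_lt _ hn0
          have hs0 : (0:ℤ) ≤ (((i + (n - r.toNat)) % n : ℕ):ℤ) := Int.natCast_nonneg _
          have hs1 : ((((i + (n - r.toNat)) % n : ℕ)):ℤ) < (n:ℤ) := by exact_mod_cast hslt
          have hsint : (((i + (n - r.toNat)) % n : ℕ):ℤ)
              = (i:ℤ) - r + (n:ℤ) * (if ((i:ℤ)) < r then 1 else 0) := by
            have hs := sigma_int n i hi r.toNat hr'le
            rw [hr'c] at hs
            exact hs
          rw [show ((n - 1 - ((i + (n - r.toNat)) % n) : ℕ):ℤ)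
              = (n:ℤ) - 1 - (((i + (n - r.toNat)) % n : ℕ):ℤ) by omega,
            SA_reflect hs0 hs1 m N, SB_reflect hs0 hs1 m L]
          have hE2 := E2 hn0 m N (i:ℤ) (((i + (n - r.toNat)) % n : ℕ):ℤ)
            (-B - (if ((i:ℤ)) < r then 1 else 0)) hN1
            (by rw [hsint]; linear_combination -hBr)
          have hE3 := E3 hn0 m L (i:ℤ) (((i + (n - r.toNat)) % n : ℕ):ℤ)
            (m * (k:ℤ) - B - (if ((i:ℤ)) < r then 1 else 0)) hL0
            (by rw [hsint]; linear_combination hnk - hBr)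
          have hd3 : (m * N + (((i + (n - r.toNat)) % n : ℕ):ℤ)) / (n:ℤ)
              = B + (if ((i:ℤ)) < r then 1 else 0) :=
            ediv_helper _ _ (i:ℤ) (by rw [hsint]; linear_combination hBr)
              (Int.natCast_nonneg i) (by exact_mod_cast hi)
          have hd4 : ((((i + (n - r.toNat)) % n : ℕ)):ℤ) / (n:ℤ) = 0 :=
            Int.ediv_eq_zero_of_lt hs0 hs1
          refine mono_eq q t ?_ ?_
          · rw [hE2, hd3, hd4]; ring
          · rw [hE3]; ring
  exact master q t n (fun i => SA m n N (i:ℤ)) (fun i => SB m n L (i:ℤ))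
    (fun i => if ((i:ℤ)) < r then 1 else 0)
    (fun i => by by_cases h : ((i:ℤ)) < r <;> simp [h])
    B (m * (k:ℤ)) N L key1 key2 key3
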